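/- Let m ≥ 0, let a, b be natural numbers, and let c ∈ {0, 1}. Write a_lo = a mod 2^m, a_hi = ⌊a / 2^m⌋, b_lo = b mod 2^m, b_hi = ⌊b / 2^m⌋, let L = a_lo + b_lo + c be the sum of the lower halves with incoming carry c, and let c_mid = ⌊L / 2^m⌋ be the carry out of the lower half. Then c_mid ∈ {0, 1} and a + b + c = (L mod 2^m) + 2^m · (a_hi + b_hi + c_mid). Consequently, with the two precomputed upper sums S₀ = a_hi + b_hi (assuming no incoming carry) and S₁ = a_hi + b_hi + 1 (assuming an incoming carry), one has a + b + c = (L mod 2^m) + 2^m · (if c_mid = 1 then S₁ else S₀); this is the correctness of the Conditional Sum Adder decomposition, in which the upper bits of the sum depend on the lower halves only through the carry c_mid out of the lower half. -/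

import Mathlib

theorem csa_aux (K a b c : ℕ) (hK : 0 < K) (hc : c = 0 ∨ c = 1) :
    ((a % K + b % K + c) / K = 0 ∨ (a % K + b % K + c) / K = 1) ∧
    a + b + c = (a % K + b % K + c) % K +
        K * (a / K + b / K + (a % K + b % K + c) / K) ∧
    a + b + c = (a % K + b % K + c) % K +
        K * (if (a % K + b % K + c) / K = 1 then a / K + b / K + 1
             else a / K + b / K) := by
  have ha := Nat.mod_lt a hK
  have hb := Nat.mod_lt b hK
  have h1 := Nat.div_add_mod a K
  have h2 := Nat.div_add_mod b K
  have h3 := Nat.div_add_mod (a % K + b % K + c) K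
  have hlt : a % K + b % K + c < K * 2 := by omega
  have hdiv2 : (a % K + b % K + c) / K < 2 := Nat.div_lt_of_lt_mul hlt
  have hdiv : (a % K + b % K + c) / K = 0 ∨ (a % K + b % K + c) / K = 1 := by
    exact Nat.le_one_iff_eq_zero_or_eq_one.mp (Nat.lt_succ_iff.mp hdiv2)
  refine ⟨hdiv, ?_, ?_⟩ <;>
    rcases hdiv with h | h <;>
      rw [h] at h3 ⊢ <;>
        simp only [Nat.mul_zero, Nat.mul_one, Nat.zero_add, Nat.add_zero,
          if_pos rfl, Nat.one_ne_zero, Nat.zero_ne_one, if_false, if_true,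
          Nat.mul_add] at h3 ⊢ <;> omega

/-- **Conditional Sum Adder decomposition.** Let `m ≥ 0`, let `a`, `b` be
natural numbers and `c ∈ {0, 1}` an incoming carry. Split the operands into
lower halves `a % 2^m`, `b % 2^m` and upper halves `a / 2^m`, `b / 2^m`, let
`L = a % 2^m + b % 2^m + c` be the sum of the lower halves with incoming carry,
and let `c_mid = L / 2^m` be the carry out of the lower half. Then
`c_mid ∈ {0, 1}`, and `a + b + c = (L % 2^m) + 2^m · (a/2^m + b/2^m + c_mid)`;
consequently, with the two precomputed upper sums `S₀ = a/2^m + b/2^m`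
(no incoming carry) and `S₁ = a/2^m + b/2^m + 1` (incoming carry), one has
`a + b + c = (L % 2^m) + 2^m · (if c_mid = 1 then S₁ else S₀)`: the upper bits
of the sum depend on the lower halves only through the carry `c_mid`. -/
theorem conditional_sum_adder_correct (m a b c : ℕ) (hc : c = 0 ∨ c = 1) :
    ((a % 2 ^ m + b % 2 ^ m + c) / 2 ^ m = 0 ∨
      (a % 2 ^ m + b % 2 ^ m + c) / 2 ^ m = 1) ∧
    a + b + c =
      (a % 2 ^ m + b % 2 ^ m + c) % 2 ^ m +
        2 ^ m * (a / 2 ^ m + b / 2 ^ m + (a % 2 ^ m + b % 2 ^ m + c) / 2 ^ m) ∧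
    a + b + c =
      (a % 2 ^ m + b % 2 ^ m + c) % 2 ^ m +
        2 ^ m *
          (if (a % 2 ^ m + b % 2 ^ m + c) / 2 ^ m = 1 then
            a / 2 ^ m + b / 2 ^ m + 1
          else
            a / 2 ^ m + b / 2 ^ m) := by
  exact csa_aux (2 ^ m) a b c (Nat.pow_pos (n := m) (by norm_num)) hc
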